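/- Let H₁, H₂ be sets of hypotheses over a common alphabet. Then cl_{H₁ ∪ H₂} = cl_{H₂} ∘ cl_{H₁} if and only if cl_{H₁} ∘ cl_{H₂} ⊆ cl_{H₂} ∘ cl_{H₁}. -/
import Mathlib


/-- The least (pre)fixpoint of `y ↦ x ⊔ s y` (Knaster–Tarski); for monotone `s`
this gives the least closure above `s`. -/
def lstar {X : Type*} [CompleteLattice X] (s : X → X) (x : X) : X :=
  sInf {y | x ⊔ s y ≤ y}

/-- The one-step function associated with a set `H` of hypotheses `e ≤ f`
(pairs of regular expressions): it adds `u·⟦e⟧·v` whenever `u·⟦f⟧·v ⊆ L`. -/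
def onestep {α : Type*} (H : Set (RegularExpression α × RegularExpression α))
    (L : Language α) : Language α :=
  {w | ∃ p ∈ H, ∃ u v : List α,
    (∀ x ∈ p.2.matches', u ++ x ++ v ∈ L) ∧ ∃ x ∈ p.1.matches', w = u ++ x ++ v}

/-- The `H`-closure of a language: the least closure above the one-step function of `H`. -/
def clH {α : Type*} (H : Set (RegularExpression α × RegularExpression α)) :
    Language α → Language α :=
  lstar (onestep H)

section lemmas

variable {α : Type*}

lemma onestep_mono (H : Set (RegularExpression α × RegularExpression α)) :
    Monotone (onestep H) := by
  rintro L L' h w ⟨p, hp, u, v, hf, x, hx, hw⟩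
  exact ⟨p, hp, u, v, fun y hy => h (hf y hy), x, hx, hw⟩

lemma onestep_subset {H H' : Set (RegularExpression α × RegularExpression α)}
    (h : H ⊆ H') (L : Language α) : onestep H L ≤ onestep H' L := by
  rintro w ⟨p, hp, rest⟩
  exact ⟨p, h hp, rest⟩

lemma le_lstar {X : Type*} [CompleteLattice X] (s : X → X) (x : X) : x ≤ lstar s x :=
  le_sInf fun _ hy => le_trans le_sup_left hy

lemma lstar_le {X : Type*} [CompleteLattice X] {s : X → X} {x y : X}
    (h : x ⊔ s y ≤ y) : lstar s x ≤ y := sInf_le h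

lemma s_lstar_le {X : Type*} [CompleteLattice X] {s : X → X} (hs : Monotone s) (x : X) :
    s (lstar s x) ≤ lstar s x :=
  le_sInf fun _ hy => (hs (sInf_le hy)).trans (le_sup_right.trans hy)

lemma lstar_mono {X : Type*} [CompleteLattice X] {s : X → X} (hs : Monotone s) :
    Monotone (lstar s) := fun x x' h =>
  lstar_le (sup_le (h.trans (le_lstar s x')) (s_lstar_le hs x'))

lemma lstar_idem {X : Type*} [CompleteLattice X] {s : X → X} (hs : Monotone s) (x : X) :
    lstar s (lstar s x) = lstar s x :=
  le_antisymm (lstar_le (sup_le le_rfl (s_lstar_le hs x))) (le_lstar s _)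

lemma le_clH (H : Set (RegularExpression α × RegularExpression α)) (L : Language α) :
    L ≤ clH H L := le_lstar _ _

lemma onestep_clH_le (H : Set (RegularExpression α × RegularExpression α)) (L : Language α) :
    onestep H (clH H L) ≤ clH H L := s_lstar_le (onestep_mono H) L

lemma clH_mono (H : Set (RegularExpression α × RegularExpression α)) :
    Monotone (clH H) := lstar_mono (onestep_mono H)

lemma clH_idem (H : Set (RegularExpression α × RegularExpression α)) (L : Language α) :
    clH H (clH H L) = clH H L := lstar_idem (onestep_mono H) L

lemma clH_le_clH_union_left (H₁ H₂ : Set (RegularExpression α × RegularExpression α))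
    (L : Language α) : clH H₁ L ≤ clH (H₁ ∪ H₂) L :=
  lstar_le (sup_le (le_clH _ L)
    ((onestep_subset Set.subset_union_left _).trans (onestep_clH_le _ L)))

lemma clH_le_clH_union_right (H₁ H₂ : Set (RegularExpression α × RegularExpression α))
    (L : Language α) : clH H₂ L ≤ clH (H₁ ∪ H₂) L :=
  lstar_le (sup_le (le_clH _ L)
    ((onestep_subset Set.subset_union_right _).trans (onestep_clH_le _ L)))

lemma comp_le_clH_union (H₁ H₂ : Set (RegularExpression α × RegularExpression α))
    (L : Language α) : clH H₂ (clH H₁ L) ≤ clH (H₁ ∪ H₂) L := by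
  calc clH H₂ (clH H₁ L) ≤ clH (H₁ ∪ H₂) (clH (H₁ ∪ H₂) L) :=
        (clH_le_clH_union_right H₁ H₂ _).trans
          (clH_mono _ (clH_le_clH_union_left H₁ H₂ L))
    _ = clH (H₁ ∪ H₂) L := clH_idem _ L

end lemmas

/-- `cl_{H₁ ∪ H₂} = cl_{H₂} ∘ cl_{H₁}` iff `cl_{H₁} ∘ cl_{H₂} ≤ cl_{H₂} ∘ cl_{H₁}`. -/
theorem clH_union_eq_comp_iff {α : Type*}
    (H₁ H₂ : Set (RegularExpression α × RegularExpression α)) :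
    (∀ L : Language α, clH (H₁ ∪ H₂) L = clH H₂ (clH H₁ L)) ↔
      (∀ L : Language α, clH H₁ (clH H₂ L) ≤ clH H₂ (clH H₁ L)) := by
  constructor
  · intro h L
    calc clH H₁ (clH H₂ L) ≤ clH (H₁ ∪ H₂) (clH (H₁ ∪ H₂) L) :=
          (clH_le_clH_union_left H₁ H₂ _).trans
            (clH_mono _ (clH_le_clH_union_right H₁ H₂ L))
      _ = clH (H₁ ∪ H₂) L := clH_idem _ L
      _ = clH H₂ (clH H₁ L) := h L
  · intro h L
    refine le_antisymm ?_ (comp_le_clH_union H₁ H₂ L)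
    refine lstar_le (sup_le ((le_clH H₁ L).trans (le_clH H₂ _)) ?_)
    have hsplit : onestep (H₁ ∪ H₂) (clH H₂ (clH H₁ L)) ≤
        onestep H₁ (clH H₂ (clH H₁ L)) ⊔ onestep H₂ (clH H₂ (clH H₁ L)) := by
      rintro w ⟨p, hp, u, v, hf, x, hx, hw⟩
      rcases hp with hp | hp
      · exact Or.inl ⟨p, hp, u, v, hf, x, hx, hw⟩
      · exact Or.inr ⟨p, hp, u, v, hf, x, hx, hw⟩
    refine hsplit.trans (sup_le ?_ (onestep_clH_le H₂ _))
    calc onestep H₁ (clH H₂ (clH H₁ L)) ≤ clH H₁ (clH H₂ (clH H₁ L)) :=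
          (onestep_mono H₁ (le_clH H₁ _)).trans (onestep_clH_le H₁ _)
      _ ≤ clH H₂ (clH H₁ (clH H₁ L)) := h _
      _ = clH H₂ (clH H₁ L) := by rw [clH_idem]
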